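/- Given staircase data with associated Ferrers configuration X, let G be any finite set of nonzero bihomogeneous polynomials minimally generating I_X. Then G consists of exactly r+1 elements and there is a bijection σ : G → {0,1,…,r} together with nonzero scalars c_g ∈ ℂ∖{0} such that g = c_g · f_{σ(g)} for every g ∈ G; that is, the minimal bihomogeneous generating set of I_X is unique up to nonzero scalar multiples. -/

import Mathlib

/- Common setup: R = ℂ[x₀,x₁,y₀,y₁] as MvPolynomial (Fin 4) ℂ with
   x₀ = X 0, x₁ = X 1, y₀ = X 2, y₁ = X 3.
   `Hf a` is the horizontal form a₁x₀ - a₀x₁ of the point a = [a₀:a₁] ∈ ℙ¹;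
   `Vf b` is the vertical form b₁y₀ - b₀y₁;
   `cross a b ≠ 0` says the (nonzero) pairs a, b are non-proportional,
   i.e. define distinct points of ℙ¹. -/

open MvPolynomial

noncomputable section

abbrev R : Type := MvPolynomial (Fin 4) ℂ

def Hf (a : ℂ × ℂ) : R := C a.2 * X 0 - C a.1 * X 1

def Vf (b : ℂ × ℂ) : R := C b.2 * X 2 - C b.1 * X 3

def cross (a b : ℂ × ℂ) : ℂ := a.1 * b.2 - a.2 * b.1

/-- The defining ideal of the point P = A×B of ℙ¹×ℙ¹. -/
def Ipt (P : (ℂ × ℂ) × (ℂ × ℂ)) : Ideal R := Ideal.span {Hf P.1, Vf P.2}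

/-- The defining ideal of a finite set of points (I_∅ = R = ⊤). -/
def Ipts (X : Finset ((ℂ × ℂ) × (ℂ × ℂ))) : Ideal R := X.inf Ipt

/-- The defining ideal of a set of points (I_∅ = R = ⊤). -/
def IptsSet (W : Set ((ℂ × ℂ) × (ℂ × ℂ))) : Ideal R := ⨅ P ∈ W, Ipt P

/-- Bihomogeneous: homogeneous separately in x₀,x₁ and in y₀,y₁. -/
def Bihom (f : R) : Prop :=
  ∃ a b : ℕ, IsWeightedHomogeneous (![1,1,0,0] : Fin 4 → ℕ) f a ∧
    IsWeightedHomogeneous (![0,0,1,1] : Fin 4 → ℕ) f b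

/-- `G` minimally generates `I`. -/
def MinGen (G : Finset R) (I : Ideal R) : Prop :=
  Ideal.span (G : Set R) = I ∧ ∀ g ∈ G, Ideal.span ((G : Set R) \ {g}) ≠ I

/-- Staircase data: r ≥ 1, 0 = t₀ < t₁ < ⋯ < t_r, 0 = s₀ < s₁ < ⋯ < s_r,
    pairwise distinct points A₁,…,A_{t_r} of ℙ¹ and pairwise distinct points
    B₁,…,B_{s_r} of ℙ¹ (all indexed starting at 1). -/
structure Staircase where
  r : ℕ
  t : ℕ → ℕ
  s : ℕ → ℕ
  A : ℕ → ℂ × ℂ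
  B : ℕ → ℂ × ℂ
  hr : 1 ≤ r
  ht0 : t 0 = 0
  hs0 : s 0 = 0
  ht : ∀ k, k < r → t k < t (k + 1)
  hs : ∀ k, k < r → s k < s (k + 1)
  hA0 : ∀ i ∈ Finset.Icc 1 (t r), A i ≠ 0
  hB0 : ∀ j ∈ Finset.Icc 1 (s r), B j ≠ 0
  hAd : ∀ i ∈ Finset.Icc 1 (t r), ∀ i' ∈ Finset.Icc 1 (t r), i ≠ i' → cross (A i) (A i') ≠ 0
  hBd : ∀ j ∈ Finset.Icc 1 (s r), ∀ j' ∈ Finset.Icc 1 (s r), j ≠ j' → cross (B j) (B j') ≠ 0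

/-- The staircase generator f_k = H₁⋯H_{t_k} · V₁⋯V_{s_{r-k}}. -/
def stairGen (S : Staircase) (k : ℕ) : R :=
  (∏ i ∈ Finset.Icc 1 (S.t k), Hf (S.A i)) * ∏ j ∈ Finset.Icc 1 (S.s (S.r - k)), Vf (S.B j)





section Util

variable {n : ℕ}

/-- If each `X i - v i` lies in an ideal `J`, then `f - aeval v f ∈ J`. -/
theorem sub_aeval_mem (v : Fin n → MvPolynomial (Fin n) ℂ) (J : Ideal (MvPolynomial (Fin n) ℂ))
    (h : ∀ i, X i - v i ∈ J) (f : MvPolynomial (Fin n) ℂ) : f - aeval v f ∈ J := by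
  induction f using MvPolynomial.induction_on with
  | C a => simp
  | add p q hp hq =>
      have : p + q - aeval v (p + q) = (p - aeval v p) + (q - aeval v q) := by
        rw [map_add]; ring
      rw [this]; exact J.add_mem hp hq
  | mul_X p i hp =>
      have : p * X i - aeval v (p * X i) =
          (p - aeval v p) * X i + aeval v p * (X i - v i) := by
        rw [map_mul, aeval_X]; ring
      rw [this]
      exact J.add_mem (J.mul_mem_right _ hp) (J.mul_mem_left _ (h i))

end Util

theorem exists_compl {a : ℂ × ℂ} (ha : a ≠ 0) : ∃ e : ℂ × ℂ, a.1 * e.2 - a.2 * e.1 = 1 := by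
  by_cases h1 : a.1 ≠ 0
  · exact ⟨(0, a.1⁻¹), by field_simp; ring⟩
  · push_neg at h1
    have h2 : a.2 ≠ 0 := by
      intro h2; exact ha (Prod.ext h1 h2)
    exact ⟨(-a.2⁻¹, 0), by field_simp; ring⟩

/-- the parametrization of the plane {(λ a, μ b)} -/
def psi (P : (ℂ × ℂ) × (ℂ × ℂ)) : R →ₐ[ℂ] MvPolynomial (Fin 2) ℂ :=
  aeval ![C P.1.1 * X 0, C P.1.2 * X 0, C P.2.1 * X 1, C P.2.2 * X 1]

theorem psi_Hf (P : (ℂ × ℂ) × (ℂ × ℂ)) (a : ℂ × ℂ) :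
    psi P (Hf a) = C (cross P.1 a) * X 0 := by
  simp [psi, Hf, cross, algebraMap_eq]
  ring

theorem psi_Vf (P : (ℂ × ℂ) × (ℂ × ℂ)) (b : ℂ × ℂ) :
    psi P (Vf b) = C (cross P.2 b) * X 1 := by
  simp [psi, Vf, cross, algebraMap_eq]
  ring

theorem psi_Hf_self (P : (ℂ × ℂ) × (ℂ × ℂ)) : psi P (Hf P.1) = 0 := by
  rw [psi_Hf]; simp [cross, mul_comm]

theorem psi_Vf_self (P : (ℂ × ℂ) × (ℂ × ℂ)) : psi P (Vf P.2) = 0 := by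
  rw [psi_Vf]; simp [cross, mul_comm]

theorem Ipt_le_ker (P : (ℂ × ℂ) × (ℂ × ℂ)) :
    Ipt P ≤ RingHom.ker (psi P : R →+* MvPolynomial (Fin 2) ℂ) := by
  rw [Ipt, Ideal.span_le]
  rintro g (rfl | rfl)
  · exact psi_Hf_self P
  · exact psi_Vf_self P

theorem Ipt_eq_ker (P : (ℂ × ℂ) × (ℂ × ℂ)) (ha : P.1 ≠ 0) (hb : P.2 ≠ 0) :
    Ipt P = RingHom.ker (psi P : R →+* MvPolynomial (Fin 2) ℂ) := by
  obtain ⟨e, he⟩ := exists_compl ha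
  obtain ⟨e', he'⟩ := exists_compl hb
  apply le_antisymm (Ipt_le_ker P)
  intro f hf
  have hker : psi P f = 0 := hf
  set He : R := Hf e with hHe
  set Ve : R := Vf e' with hVe
  have hCa : (C P.1.1 * C e.2 - C P.1.2 * C e.1 : R) = 1 := by
    rw [← C_mul, ← C_mul, ← C_sub, he, C_1]
  have hCb : (C P.2.1 * C e'.2 - C P.2.2 * C e'.1 : R) = 1 := by
    rw [← C_mul, ← C_mul, ← C_sub, he', C_1]
  set v : Fin 4 → R := ![C P.1.1 * He, C P.1.2 * He, C P.2.1 * Ve, C P.2.2 * Ve] with hv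
  have h0 : X 0 - v 0 ∈ Ipt P := by
    have : X 0 - v 0 = C (-e.1) * Hf P.1 := by
      show (X 0 : R) - C P.1.1 * He = _
      rw [hHe, Hf, Hf, map_neg]
      linear_combination (-(X 0) : R) * hCa
    rw [this]
    exact Ideal.mul_mem_left _ _ (Ideal.subset_span (by simp [Ipt]))
  have h1 : X 1 - v 1 ∈ Ipt P := by
    have : X 1 - v 1 = C (-e.2) * Hf P.1 := by
      show (X 1 : R) - C P.1.2 * He = _
      rw [hHe, Hf, Hf, map_neg]
      linear_combination (-(X 1) : R) * hCa
    rw [this]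
    exact Ideal.mul_mem_left _ _ (Ideal.subset_span (by simp [Ipt]))
  have h2 : X 2 - v 2 ∈ Ipt P := by
    have : X 2 - v 2 = C (-e'.1) * Vf P.2 := by
      show (X 2 : R) - C P.2.1 * Ve = _
      rw [hVe, Vf, Vf, map_neg]
      linear_combination (-(X 2) : R) * hCb
    rw [this]
    exact Ideal.mul_mem_left _ _ (Ideal.subset_span (by simp [Ipt]))
  have h3 : X 3 - v 3 ∈ Ipt P := by
    have : X 3 - v 3 = C (-e'.2) * Vf P.2 := by
      show (X 3 : R) - C P.2.2 * Ve = _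
      rw [hVe, Vf, Vf, map_neg]
      linear_combination (-(X 3) : R) * hCb
    rw [this]
    exact Ideal.mul_mem_left _ _ (Ideal.subset_span (by simp [Ipt]))
  have hmem : ∀ i, X i - v i ∈ Ipt P := by
    intro i; fin_cases i
    · exact h0
    · exact h1
    · exact h2
    · exact h3
  have key := sub_aeval_mem v (Ipt P) hmem f
  -- aeval v f = σ (psi P f) = 0
  have hcomp : (aeval v : R →ₐ[ℂ] R) =
      ((aeval ![He, Ve] : MvPolynomial (Fin 2) ℂ →ₐ[ℂ] R).comp (psi P)) := by
    apply MvPolynomial.algHom_ext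
    intro i
    fin_cases i <;>
      simp [psi, hv, algebraMap_eq]
  have : aeval v f = 0 := by
    rw [show aeval v f = ((aeval ![He, Ve] : MvPolynomial (Fin 2) ℂ →ₐ[ℂ] R).comp (psi P)) f
        from congrFun (congrArg _ hcomp) f]
    simp [hker]
  rwa [this, sub_zero] at key

-- Section 2
/-- parametrization of the surface V_b = 0 : y = μ b -/
def chi (b : ℂ × ℂ) : R →ₐ[ℂ] MvPolynomial (Fin 3) ℂ :=
  aeval ![X 0, X 1, C b.1 * X 2, C b.2 * X 2]

theorem chi_Vf (b b' : ℂ × ℂ) : chi b (Vf b') = C (cross b b') * X 2 := by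
  simp [chi, Vf, cross, algebraMap_eq]
  ring

theorem span_Vf_eq_ker (b : ℂ × ℂ) (hb : b ≠ 0) :
    Ideal.span {Vf b} = RingHom.ker (chi b : R →+* MvPolynomial (Fin 3) ℂ) := by
  obtain ⟨e, he⟩ := exists_compl hb
  apply le_antisymm
  · rw [Ideal.span_le]
    rintro g rfl
    show chi b (Vf b) = 0
    rw [chi_Vf]; simp [cross, mul_comm]
  · intro f hf
    have hker : chi b f = 0 := hf
    set Ve : R := Vf e with hVe
    have hCb : (C b.1 * C e.2 - C b.2 * C e.1 : R) = 1 := by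
      rw [← C_mul, ← C_mul, ← C_sub, he, C_1]
    set v : Fin 4 → R := ![X 0, X 1, C b.1 * Ve, C b.2 * Ve] with hv
    have hmem : ∀ i, X i - v i ∈ Ideal.span {Vf b} := by
      have h2 : X 2 - v 2 ∈ Ideal.span {Vf b} := by
        have : X 2 - v 2 = C (-e.1) * Vf b := by
          show (X 2 : R) - C b.1 * Ve = _
          rw [hVe, Vf, Vf, map_neg]
          linear_combination (-(X 2) : R) * hCb
        rw [this]
        exact Ideal.mul_mem_left _ _ (Ideal.subset_span rfl)
      have h3 : X 3 - v 3 ∈ Ideal.span {Vf b} := by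
        have : X 3 - v 3 = C (-e.2) * Vf b := by
          show (X 3 : R) - C b.2 * Ve = _
          rw [hVe, Vf, Vf, map_neg]
          linear_combination (-(X 3) : R) * hCb
        rw [this]
        exact Ideal.mul_mem_left _ _ (Ideal.subset_span rfl)
      intro i; fin_cases i
      · show (X 0 : R) - X 0 ∈ _
        simpa using Ideal.zero_mem _
      · show (X 1 : R) - X 1 ∈ _
        simpa using Ideal.zero_mem _
      · exact h2
      · exact h3
    have key := sub_aeval_mem v (Ideal.span {Vf b}) hmem f
    have hcomp : (aeval v : R →ₐ[ℂ] R) =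
        ((aeval ![X 0, X 1, Ve] : MvPolynomial (Fin 3) ℂ →ₐ[ℂ] R).comp (chi b)) := by
      apply MvPolynomial.algHom_ext
      intro i
      fin_cases i <;> simp [chi, hv, algebraMap_eq]
    have : aeval v f = 0 := by
      rw [show aeval v f = _ from congrFun (congrArg _ hcomp) f]
      simp [hker]
    rwa [this, sub_zero] at key

theorem Vf_prime (b : ℂ × ℂ) (hb : b ≠ 0) : Prime (Vf b) := by
  have hne : Vf b ≠ 0 := by
    intro h
    have := chi_Vf ((1 : ℂ), (0 : ℂ)) b
    rw [h, map_zero] at this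
    have hX : (C (cross (1,0) b) * X 2 : MvPolynomial (Fin 3) ℂ) ≠ 0 ∨ cross (1,0) b = 0 := by
      by_cases hc : cross (1,0) b = 0
      · exact Or.inr hc
      · exact Or.inl (mul_ne_zero (by simpa using hc) (X_ne_zero 2))
    rcases hX with hX | hc
    · exact hX this.symm
    · -- cross (1,0) b = b.2 = 0 ; try (0,1)
      have := chi_Vf ((0 : ℂ), (1 : ℂ)) b
      rw [h, map_zero] at this
      by_cases hc2 : cross (0,1) b = 0
      · apply hb
        have e1 : b.2 = 0 := by simpa [cross] using hc
        have e2 : b.1 = 0 := by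
          have := hc2
          simp [cross] at this
          exact this
        exact Prod.ext e2 e1
      · exact (mul_ne_zero (by simpa using hc2) (X_ne_zero 2)) this.symm
  rw [← Ideal.span_singleton_prime hne, span_Vf_eq_ker b hb]
  exact RingHom.ker_isPrime _

theorem Vf_not_dvd (b b' : ℂ × ℂ) (hb : b ≠ 0) (hc : cross b b' ≠ 0) : ¬ Vf b ∣ Vf b' := by
  intro hdvd
  have : Vf b' ∈ Ideal.span {Vf b} := Ideal.mem_span_singleton.mpr hdvd
  rw [span_Vf_eq_ker b hb] at this
  have : chi b (Vf b') = 0 := this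
  rw [chi_Vf] at this
  exact (mul_ne_zero (C_ne_zero.mpr hc) (X_ne_zero 2)) this

theorem prod_Vf_dvd (s : Finset ℕ) (B : ℕ → ℂ × ℂ) (hB0 : ∀ j ∈ s, B j ≠ 0)
    (hBd : ∀ j ∈ s, ∀ j' ∈ s, j ≠ j' → cross (B j) (B j') ≠ 0)
    (p : R) (h : ∀ j ∈ s, Vf (B j) ∣ p) : (∏ j ∈ s, Vf (B j)) ∣ p := by
  classical
  induction s using Finset.induction_on with
  | empty => simpa using one_dvd p
  | @insert a s ha ih =>
      rw [Finset.prod_insert ha]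
      obtain ⟨q, hq⟩ := ih (fun j hj => hB0 j (Finset.mem_insert_of_mem hj))
        (fun j hj j' hj' => hBd j (Finset.mem_insert_of_mem hj) j' (Finset.mem_insert_of_mem hj'))
        (fun j hj => h j (Finset.mem_insert_of_mem hj))
      have hprime := Vf_prime (B a) (hB0 a (Finset.mem_insert_self a s))
      have hdvd : Vf (B a) ∣ (∏ j ∈ s, Vf (B j)) * q := hq ▸ h a (Finset.mem_insert_self a s)
      rcases hprime.dvd_or_dvd hdvd with hd | hd
      · rcases (hprime.dvd_finset_prod_iff _).mp hd with ⟨j, hj, hdj⟩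
        exact absurd hdj (Vf_not_dvd (B a) (B j) (hB0 a (Finset.mem_insert_self a s))
          (hBd a (Finset.mem_insert_self a s) j (Finset.mem_insert_of_mem hj)
            (fun hEq => ha (hEq ▸ hj))))
      · obtain ⟨q', hq'⟩ := hd
        exact ⟨q', by rw [hq, hq']; ring⟩

/-- the Ferrers staircase generators for column count T, column heights α -/
def ferrGens (T : ℕ) (A B : ℕ → ℂ × ℂ) (α : ℕ → ℕ) : Set R :=
  {g : R | ∃ m, m ≤ T ∧
    g = (∏ i ∈ Finset.Icc 1 m, Hf (A i)) * ∏ j ∈ Finset.Icc 1 (α (m+1)), Vf (B j)}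

set_option maxHeartbeats 1000000 in
theorem core (T : ℕ) : ∀ (A : ℕ → ℂ × ℂ) (α : ℕ → ℕ) (f : R) (B : ℕ → ℂ × ℂ),
    (∀ i ∈ Finset.Icc 1 T, A i ≠ 0) →
    (∀ i ∈ Finset.Icc 1 T, ∀ i' ∈ Finset.Icc 1 T, i ≠ i' → cross (A i) (A i') ≠ 0) →
    (∀ j ∈ Finset.Icc 1 (α 1), B j ≠ 0) →
    (∀ j ∈ Finset.Icc 1 (α 1), ∀ j' ∈ Finset.Icc 1 (α 1), j ≠ j' → cross (B j) (B j') ≠ 0) →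
    (∀ i j, 1 ≤ i → i ≤ j → j ≤ T + 1 → α j ≤ α i) →
    α (T + 1) = 0 →
    (∀ i ∈ Finset.Icc 1 T, ∀ j ∈ Finset.Icc 1 (α i), f ∈ Ipt (A i, B j)) →
    f ∈ Ideal.span (ferrGens T A B α) := by
  induction T with
  | zero =>
      intro A α f B _ _ _ _ _ hα0 _
      have h1 : (1 : R) ∈ ferrGens 0 A B α := by
        refine ⟨0, le_refl 0, ?_⟩
        rw [hα0]
        simp
      have : Ideal.span (ferrGens 0 A B α) = ⊤ :=
        eq_top_iff.mpr fun x _ => by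
          simpa using Ideal.mul_mem_left _ x (Ideal.subset_span h1)
      rw [this]; trivial
  | succ T ih =>
      intro A α f B hA0 hAd hB0 hBd hαa hαT hf
      have h1T : (1 : ℕ) ∈ Finset.Icc 1 (T + 1) := by simp
      have ha : A 1 ≠ 0 := hA0 1 h1T
      obtain ⟨e, he⟩ := exists_compl ha
      set a := A 1 with haa
      set He : R := C e.2 * X 0 - C e.1 * X 1 with hHe
      set v : Fin 4 → R := ![C a.1 * He, C a.2 * He, X 2, X 3] with hv
      set ρ : R := aeval v f with hρ
      have hCa : (C a.1 * C e.2 - C a.2 * C e.1 : R) = 1 := by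
        rw [← C_mul, ← C_mul, ← C_sub, he, C_1]
      -- f - ρ ∈ span {Hf a}
      have hsub : f - ρ ∈ Ideal.span {Hf a} := by
        apply sub_aeval_mem
        intro i
        have h0 : (X 0 : R) - C a.1 * He = C (-e.1) * Hf a := by
          rw [hHe, Hf, map_neg]
          linear_combination (-(X 0) : R) * hCa
        have h1 : (X 1 : R) - C a.2 * He = C (-e.2) * Hf a := by
          rw [hHe, Hf, map_neg]
          linear_combination (-(X 1) : R) * hCa
        fin_cases i
        · show (X 0 : R) - C a.1 * He ∈ _
          rw [h0]; exact Ideal.mul_mem_left _ _ (Ideal.subset_span rfl)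
        · show (X 1 : R) - C a.2 * He ∈ _
          rw [h1]; exact Ideal.mul_mem_left _ _ (Ideal.subset_span rfl)
        · show (X 2 : R) - X 2 ∈ _
          simp
        · show (X 3 : R) - X 3 ∈ _
          simp
      -- aeval v kills Hf a and fixes Vf b
      have hvH : aeval v (Hf a) = 0 := by
        rw [Hf]
        simp only [map_sub, map_mul, aeval_C, aeval_X, algebraMap_eq]
        show C a.2 * (C a.1 * He) - C a.1 * (C a.2 * He) = 0
        ring
      have hvV : ∀ b, aeval v (Vf b) = Vf b := by
        intro b
        rw [Vf]
        simp only [map_sub, map_mul, aeval_C, aeval_X, algebraMap_eq]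
        rfl
      -- ρ divisible by each Vf (B j), j ≤ α 1
      have hρdvd : ∀ j ∈ Finset.Icc 1 (α 1), Vf (B j) ∣ ρ := by
        intro j hj
        have hfj : f ∈ Ipt (a, B j) := hf 1 h1T j hj
        rw [Ipt, Ideal.mem_span_pair] at hfj
        obtain ⟨p, q, hpq⟩ := hfj
        have : ρ = aeval v p * aeval v (Hf a) + aeval v q * Vf (B j) := by
          rw [hρ, ← hpq]
          simp only [map_add, map_mul, hvV]
        rw [this, hvH, mul_zero, zero_add]
        exact Dvd.intro_left _ rfl
      obtain ⟨h, hh⟩ := prod_Vf_dvd (Finset.Icc 1 (α 1)) B hB0 hBd ρ hρdvd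
      -- f - ρ = Hf a * q
      obtain ⟨q, hq⟩ := Ideal.mem_span_singleton.mp hsub
      -- q satisfies the shifted vanishing conditions
      have hq' : ∀ i ∈ Finset.Icc 1 T, ∀ j ∈ Finset.Icc 1 (α (i+1)),
          q ∈ Ipt (A (i+1), B j) := by
        intro i hi j hj
        simp only [Finset.mem_Icc] at hi hj
        have hi1T : i + 1 ∈ Finset.Icc 1 (T + 1) := by
          simp only [Finset.mem_Icc]; omega
        have hjα1 : j ∈ Finset.Icc 1 (α 1) := by
          simp only [Finset.mem_Icc]
          have := hαa 1 (i+1) le_rfl (by omega) (by omega)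
          omega
        have hPa : A (i+1) ≠ 0 := hA0 _ hi1T
        have hPb : B j ≠ 0 := hB0 _ hjα1
        rw [Ipt_eq_ker _ hPa hPb]
        have hψf : psi (A (i+1), B j) f = 0 :=
          Ipt_le_ker _ (hf (i+1) hi1T j (by simp only [Finset.mem_Icc]; omega))
        have hψρ : psi (A (i+1), B j) ρ = 0 := by
          rw [hh]
          have : Vf (B j) ∣ ∏ j' ∈ Finset.Icc 1 (α 1), Vf (B j') := Finset.dvd_prod_of_mem _ hjα1
          obtain ⟨w, hw⟩ := this
          rw [hw, map_mul, map_mul]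
          rw [show psi (A (i+1), B j) (Vf (B j)) = 0 from psi_Vf_self (A (i+1), B j)]
          ring
        have hψHq : psi (A (i+1), B j) (Hf a) * psi (A (i+1), B j) q = 0 := by
          rw [← map_mul, ← hq, map_sub, hψf, hψρ, sub_zero]
        have hψH : psi (A (i+1), B j) (Hf a) ≠ 0 := by
          rw [psi_Hf]
          refine mul_ne_zero (C_ne_zero.mpr ?_) (X_ne_zero 0)
          exact hAd (i+1) hi1T 1 h1T (by omega)
        have := mul_eq_zero.mp hψHq
        tauto
      -- apply induction hypothesis
      have hqmem := ih (fun i => A (i+1)) (fun j => α (j+1)) q B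
        (fun i hi => hA0 (i+1) (by simp only [Finset.mem_Icc] at hi ⊢; omega))
        (fun i hi i' hi' hne => hAd (i+1) (by simp only [Finset.mem_Icc] at hi ⊢; omega)
          (i'+1) (by simp only [Finset.mem_Icc] at hi' ⊢; omega) (by omega))
        (fun j hj => hB0 j (by
          simp only [Finset.mem_Icc] at hj ⊢
          have := hαa 1 (1+1) le_rfl (by omega) (by omega)
          omega))
        (fun j hj j' hj' hne => hBd j (by
            simp only [Finset.mem_Icc] at hj ⊢
            have := hαa 1 (1+1) le_rfl (by omega) (by omega); omega)
          j' (by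
            simp only [Finset.mem_Icc] at hj' ⊢
            have := hαa 1 (1+1) le_rfl (by omega) (by omega); omega) hne)
        (fun i j h1i hij hjT => hαa (i+1) (j+1) (by omega) (by omega) (by omega))
        hαT hq'
      -- Hf a * (span gens') ⊆ span gens
      have hmul : Hf a * q ∈ Ideal.span (ferrGens (T+1) A B α) := by
        refine Submodule.span_induction ?_ ?_ ?_ ?_ hqmem
        · rintro g ⟨m, hm, rfl⟩
          apply Ideal.subset_span
          refine ⟨m + 1, by omega, ?_⟩
          rw [← mul_assoc]
          refine congrArg (· * _) ?_
          -- Hf (A 1) * ∏_{i ∈ Icc 1 m} Hf (A (i+1)) = ∏_{i ∈ Icc 1 (m+1)} Hf (A i)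
          rw [show Finset.Icc 1 (m+1) = Finset.Ico 1 (m+2) by rw [← Finset.Ico_add_one_right_eq_Icc]; rfl,
            Finset.prod_eq_prod_Ico_succ_bot (by omega) (fun i => Hf (A i))]
          refine congrArg (HMul.hMul (Hf a)) ?_
          rw [show Finset.Ico 2 (m+2) = Finset.Icc 2 (m+1) by rw [← Finset.Ico_add_one_right_eq_Icc]; rfl]
          rw [show Finset.Icc 2 (m+1) = (Finset.Icc 1 m).map
            (addRightEmbedding 1) from by rw [Finset.map_add_right_Icc]]
          rw [Finset.prod_map]
          rfl
        · simp
        · intro x y _ _ hx hy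
          rw [mul_add]; exact Ideal.add_mem _ hx hy
        · intro r x _ hx
          rw [smul_eq_mul, show Hf a * (r * x) = r * (Hf a * x) by ring]
          exact Ideal.mul_mem_left _ _ hx
      have hρmem : ρ ∈ Ideal.span (ferrGens (T+1) A B α) := by
        rw [hh]
        apply Ideal.mul_mem_right
        apply Ideal.subset_span
        exact ⟨0, by omega, by simp⟩
      have : f = Hf a * q + ρ := by rw [← hq]; exact (sub_add_cancel f ρ).symm
      rw [this]
      exact Ideal.add_mem _ hmul hρmem

namespace Staircase
variable (S : Staircase)

theorem t_mono : ∀ {k k'}, k ≤ k' → k' ≤ S.r → S.t k ≤ S.t k' := by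
  intro k k' hk hk'
  induction k' with
  | zero => rw [Nat.le_zero.mp hk]
  | succ n ihn =>
      rcases Nat.lt_or_ge k (n+1) with h | h
      · exact le_trans (ihn (by omega) (by omega)) (le_of_lt (S.ht n (by omega)))
      · rw [show k = n + 1 by omega]

theorem t_strict_mono : ∀ {k k'}, k < k' → k' ≤ S.r → S.t k < S.t k' := by
  intro k k' hk hk'
  calc S.t k < S.t (k+1) := S.ht k (by omega)
    _ ≤ S.t k' := S.t_mono (by omega) hk'

theorem s_mono : ∀ {k k'}, k ≤ k' → k' ≤ S.r → S.s k ≤ S.s k' := by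
  intro k k' hk hk'
  induction k' with
  | zero => rw [Nat.le_zero.mp hk]
  | succ n ihn =>
      rcases Nat.lt_or_ge k (n+1) with h | h
      · exact le_trans (ihn (by omega) (by omega)) (le_of_lt (S.hs n (by omega)))
      · rw [show k = n + 1 by omega]

theorem s_strict_mono : ∀ {k k'}, k < k' → k' ≤ S.r → S.s k < S.s k' := by
  intro k k' hk hk'
  calc S.s k < S.s (k+1) := S.hs k (by omega)
    _ ≤ S.s k' := S.s_mono (by omega) hk'

theorem t_r_pos : 1 ≤ S.t S.r := by
  have := S.t_strict_mono (k := 0) (k' := S.r) S.hr le_rfl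
  omega

/-- the block index of column i -/
def K (i : ℕ) : ℕ := Nat.findGreatest (fun k => S.t k < i) (S.r - 1)

theorem K_spec {i : ℕ} (h1 : 1 ≤ i) (h2 : i ≤ S.t S.r) :
    S.K i < S.r ∧ S.t (S.K i) < i ∧ i ≤ S.t (S.K i + 1) := by
  have hP0 : S.t 0 < i := by rw [S.ht0]; omega
  have hle : S.K i ≤ S.r - 1 := Nat.findGreatest_le _
  have hspec : S.t (S.K i) < i := by
    exact Nat.findGreatest_spec (P := fun k => S.t k < i) (Nat.zero_le _) hP0
  refine ⟨by have := S.hr; omega, hspec, ?_⟩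
  rcases Nat.lt_or_ge (S.K i) (S.r - 1) with h | h
  · by_contra hcon
    push_neg at hcon
    exact absurd hcon (by
      have := Nat.findGreatest_is_greatest (lt_add_one (S.K i)) (by omega :
        S.K i + 1 ≤ S.r - 1)
      simpa using this)
  · have : S.K i = S.r - 1 := by omega
    rw [this]
    have : S.r - 1 + 1 = S.r := by have := S.hr; omega
    rw [this]
    exact h2

theorem K_eq {i k : ℕ} (hk : k < S.r) (h1 : S.t k < i) (h2 : i ≤ S.t (k+1)) :
    S.K i = k := by
  have hi1 : 1 ≤ i := by omega
  have hiT : i ≤ S.t S.r := le_trans h2 (S.t_mono (by omega) le_rfl)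
  obtain ⟨hKr, hK1, hK2⟩ := S.K_spec hi1 hiT
  by_contra hne
  rcases Nat.lt_or_ge (S.K i) k with h | h
  · have : S.t (S.K i + 1) ≤ S.t k := S.t_mono (by omega) (by omega)
    omega
  · have : S.t (k + 1) ≤ S.t (S.K i) := S.t_mono (by omega) (by omega)
    omega

/-- the Ferrers column heights of the staircase -/
def alpha (i : ℕ) : ℕ := if i ≤ S.t S.r then S.s (S.r - S.K i) else 0

theorem alpha_anti : ∀ i j, 1 ≤ i → i ≤ j → j ≤ S.t S.r + 1 → S.alpha j ≤ S.alpha i := by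
  intro i j h1 h2 h3
  by_cases hj : j ≤ S.t S.r
  · have hi : i ≤ S.t S.r := le_trans h2 hj
    rw [alpha, alpha, if_pos hj, if_pos hi]
    have hKij : S.K i ≤ S.K j := Nat.findGreatest_mono (fun k hk => lt_of_lt_of_le hk h2) le_rfl
    exact S.s_mono (by omega) (by omega)
  · rw [alpha, if_neg hj]
    exact Nat.zero_le _
end Staircase

/-- the set of staircase generators -/
def stairGens (S : Staircase) : Set R := {g : R | ∃ k, k ≤ S.r ∧ g = stairGen S k}

theorem Icc_one_eq_Ioc (n : ℕ) : Finset.Icc 1 n = Finset.Ioc 0 n := by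
  ext x; simp; omega

theorem ferr_subset_span (S : Staircase) :
    ferrGens (S.t S.r) S.A S.B S.alpha ⊆ Ideal.span (stairGens S) := by
  rintro g ⟨m, hm, rfl⟩
  rcases Nat.lt_or_ge m (S.t S.r) with hmT | hmT
  · -- m < T : use k = K (m+1)
    have hm1 : 1 ≤ m + 1 := by omega
    have hm1T : m + 1 ≤ S.t S.r := by omega
    obtain ⟨hKr, hK1, hK2⟩ := S.K_spec hm1 hm1T
    set k := S.K (m+1) with hk
    have hα : S.alpha (m+1) = S.s (S.r - k) := by rw [Staircase.alpha, if_pos hm1T]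
    have htkm : S.t k ≤ m := by omega
    have hsplit : (∏ i ∈ Finset.Icc 1 m, Hf (S.A i)) =
        (∏ i ∈ Finset.Icc 1 (S.t k), Hf (S.A i)) * ∏ i ∈ Finset.Ioc (S.t k) m, Hf (S.A i) := by
      rw [Icc_one_eq_Ioc, Icc_one_eq_Ioc]
      exact (Finset.prod_Ioc_consecutive _ (Nat.zero_le _) htkm).symm
    rw [hα, hsplit]
    rw [show (∏ i ∈ Finset.Icc 1 (S.t k), Hf (S.A i)) * (∏ i ∈ Finset.Ioc (S.t k) m, Hf (S.A i)) *
        ∏ j ∈ Finset.Icc 1 (S.s (S.r - k)), Vf (S.B j) =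
        (∏ i ∈ Finset.Ioc (S.t k) m, Hf (S.A i)) * stairGen S k by rw [stairGen]; ring]
    exact Ideal.mul_mem_left _ _ (Ideal.subset_span ⟨k, by omega, rfl⟩)
  · -- m = T
    have hmeq : m = S.t S.r := le_antisymm hm hmT
    subst hmeq
    have hα : S.alpha (S.t S.r + 1) = 0 := by
      rw [Staircase.alpha, if_neg (by omega)]
    rw [hα]
    apply Ideal.subset_span
    refine ⟨S.r, le_rfl, ?_⟩
    rw [stairGen]
    simp [S.hs0]

theorem stair_subset_span (S : Staircase) :
    stairGens S ⊆ Ideal.span (ferrGens (S.t S.r) S.A S.B S.alpha) := by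
  rintro g ⟨k, hk, rfl⟩
  apply Ideal.subset_span
  rcases Nat.lt_or_ge k S.r with hkr | hkr
  · refine ⟨S.t k, le_of_lt (S.t_strict_mono hkr le_rfl), ?_⟩
    have hKk : S.K (S.t k + 1) = k := S.K_eq hkr (by omega) (S.ht k hkr)
    have h2 := S.ht k hkr
    have h3 := S.t_mono (k := k + 1) (k' := S.r) (by omega) le_rfl
    have : S.alpha (S.t k + 1) = S.s (S.r - k) := by
      rw [Staircase.alpha, if_pos (by omega), hKk]
    rw [this, stairGen]
  · have hkeq : k = S.r := by omega
    refine ⟨S.t S.r, le_rfl, ?_⟩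
    have : S.alpha (S.t S.r + 1) = 0 := by rw [Staircase.alpha, if_neg (by omega)]
    rw [hkeq, this, stairGen]
    simp [S.hs0]

/-- the membership form of the hypothesis hIX -/
def IXform (S : Staircase) : Ideal R :=
  ⨅ k ∈ Finset.range S.r, ⨅ i ∈ Finset.Ioc (S.t k) (S.t (k + 1)),
      ⨅ j ∈ Finset.Icc 1 (S.s (S.r - k)), Ipt (S.A i, S.B j)

theorem mem_IXform (S : Staircase) (f : R) :
    f ∈ IXform S ↔ ∀ k < S.r, ∀ i ∈ Finset.Ioc (S.t k) (S.t (k+1)),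
      ∀ j ∈ Finset.Icc 1 (S.s (S.r - k)), f ∈ Ipt (S.A i, S.B j) := by
  simp [IXform, Submodule.mem_iInf]

theorem mem_IXform_iff_ferr (S : Staircase) (f : R) :
    f ∈ IXform S ↔ ∀ i ∈ Finset.Icc 1 (S.t S.r), ∀ j ∈ Finset.Icc 1 (S.alpha i),
      f ∈ Ipt (S.A i, S.B j) := by
  rw [mem_IXform]
  constructor
  · intro h i hi j hj
    simp only [Finset.mem_Icc] at hi hj
    obtain ⟨hKr, hK1, hK2⟩ := S.K_spec hi.1 hi.2
    have hα : S.alpha i = S.s (S.r - S.K i) := by rw [Staircase.alpha, if_pos hi.2]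
    exact h (S.K i) hKr i (by simp only [Finset.mem_Ioc]; omega)
      j (by simp only [Finset.mem_Icc]; omega)
  · intro h k hk i hi j hj
    simp only [Finset.mem_Ioc] at hi
    have hiT : i ≤ S.t S.r := le_trans hi.2 (S.t_mono (by omega) le_rfl)
    have hKi : S.K i = k := S.K_eq hk hi.1 hi.2
    have hα : S.alpha i = S.s (S.r - k) := by
      rw [Staircase.alpha, if_pos hiT, hKi]
    exact h i (by simp only [Finset.mem_Icc]; omega) j (by rwa [hα])

set_option maxHeartbeats 1000000 in
theorem stairGen_mem_IXform (S : Staircase) (k : ℕ) (hk : k ≤ S.r) :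
    stairGen S k ∈ IXform S := by
  rw [mem_IXform]
  intro k' hk' i hi j hj
  simp only [Finset.mem_Ioc] at hi
  simp only [Finset.mem_Icc] at hj
  rcases Nat.lt_or_ge (S.t k) i with h | h
  · -- i > t k : use the V factor; k ≤ k'
    have hkk' : k ≤ k' := by
      by_contra hcon
      push_neg at hcon
      have := S.t_mono (k := k'+1) (k' := k) (by omega) hk
      omega
    have hjs : j ≤ S.s (S.r - k) := le_trans hj.2 (S.s_mono (by omega) (by omega))
    have hdvd : Vf (S.B j) ∣ stairGen S k := by
      rw [stairGen]
      exact Dvd.dvd.mul_left (Finset.dvd_prod_of_mem _ (by simp only [Finset.mem_Icc]; omega)) _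
    obtain ⟨c, hc⟩ := hdvd
    rw [hc, mul_comm]
    exact Ideal.mul_mem_left _ _ (Ideal.subset_span (by simp [Ipt]))
  · -- i ≤ t k : use the H factor
    have hdvd : Hf (S.A i) ∣ stairGen S k := by
      rw [stairGen]
      exact Dvd.dvd.mul_right (Finset.dvd_prod_of_mem (fun i => Hf (S.A i)) (a := i) (by simp only [Finset.mem_Icc]; omega)) _
    obtain ⟨c, hc⟩ := hdvd
    rw [hc, mul_comm]
    exact Ideal.mul_mem_left _ _ (Ideal.subset_span (by simp [Ipt]))

/-- The main structural result: I_X is generated by the staircase generators. -/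
theorem IXform_eq_span (S : Staircase) : IXform S = Ideal.span (stairGens S) := by
  apply le_antisymm
  · intro f hf
    rw [mem_IXform_iff_ferr] at hf
    have hcore := core (S.t S.r) S.A S.alpha f S.B S.hA0 S.hAd
      (fun j hj => S.hB0 j (by
        have h1 : S.alpha 1 ≤ S.s S.r := by
          rw [Staircase.alpha]
          split
          · exact S.s_mono (by omega) le_rfl
          · exact Nat.zero_le _
        simp only [Finset.mem_Icc] at hj ⊢; omega))
      (fun j hj j' hj' hne => S.hBd j (by
          have h1 : S.alpha 1 ≤ S.s S.r := by
            rw [Staircase.alpha]; split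
            · exact S.s_mono (by omega) le_rfl
            · exact Nat.zero_le _
          simp only [Finset.mem_Icc] at hj ⊢; omega)
        j' (by
          have h1 : S.alpha 1 ≤ S.s S.r := by
            rw [Staircase.alpha]; split
            · exact S.s_mono (by omega) le_rfl
            · exact Nat.zero_le _
          simp only [Finset.mem_Icc] at hj' ⊢; omega) hne)
      S.alpha_anti
      (by rw [Staircase.alpha, if_neg (by omega)])
      hf
    exact Ideal.span_le.mpr (ferr_subset_span S) hcore
  · rw [Ideal.span_le]
    rintro g ⟨k, hk, rfl⟩
    exact stairGen_mem_IXform S k hk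

/-- bigraded weight -/
def bw : Fin 4 → ℕ × ℕ := ![(1,0),(1,0),(0,1),(0,1)]

theorem weight_bw (d : Fin 4 →₀ ℕ) :
    Finsupp.weight bw d = (Finsupp.weight (![1,1,0,0] : Fin 4 → ℕ) d,
      Finsupp.weight (![0,0,1,1] : Fin 4 → ℕ) d) := by
  classical
  rw [Finsupp.weight_apply, Finsupp.weight_apply, Finsupp.weight_apply]
  rw [Finsupp.sum, Finsupp.sum, Finsupp.sum]
  rw [Prod.ext_iff]
  constructor
  · rw [Prod.fst_sum]
    apply Finset.sum_congr rfl
    intro i _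
    have : ∀ j : Fin 4, (bw j).1 = (![1,1,0,0] : Fin 4 → ℕ) j := by decide
    simp [Prod.smul_fst, ← this]
  · rw [Prod.snd_sum]
    apply Finset.sum_congr rfl
    intro i _
    have : ∀ j : Fin 4, (bw j).2 = (![0,0,1,1] : Fin 4 → ℕ) j := by decide
    simp [Prod.smul_snd, ← this]

theorem bihom_iff (f : R) : Bihom f ↔ ∃ d : ℕ × ℕ, IsWeightedHomogeneous bw f d := by
  constructor
  · rintro ⟨a, b, ha, hb⟩
    exact ⟨(a, b), fun d hd => by rw [weight_bw, ha hd, hb hd]⟩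
  · rintro ⟨d, hd⟩
    refine ⟨d.1, d.2, fun m hm => ?_, fun m hm => ?_⟩
    · have := hd hm; rw [weight_bw] at this
      exact (Prod.ext_iff.mp this).1
    · have := hd hm; rw [weight_bw] at this
      exact (Prod.ext_iff.mp this).2

theorem isWH_C_iff (p : R) (h : IsWeightedHomogeneous bw p (0,0)) : ∃ c : ℂ, p = C c := by
  haveI : Finsupp.NonTorsionWeight ℕ bw := Finsupp.nonTorsionWeight_of ℕ (w := bw) (by decide)
  refine ⟨coeff 0 p, ?_⟩
  ext d
  by_cases hd : d = 0
  · subst hd; simp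
  · rw [coeff_C, if_neg (Ne.symm hd)]
    by_contra hc
    have := h hc
    rw [show ((0,0) : ℕ × ℕ) = 0 from rfl] at this
    exact hd ((Finsupp.weight_eq_zero_iff_eq_zero bw).mp this)

section CompMul
variable (h g : R) (e n : ℕ × ℕ)

theorem comp_mul_homog_of_add (hg : IsWeightedHomogeneous bw g e) (d : ℕ × ℕ) (hd : d + e = n) :
    weightedHomogeneousComponent bw n (h * g) =
      weightedHomogeneousComponent bw d h * g := by
  classical
  have hfin : (Function.support fun m => weightedHomogeneousComponent bw m h).Finite :=
    weightedHomogeneousComponent_finsupp h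
  have hfin' : (Function.support fun m => weightedHomogeneousComponent bw m h * g).Finite :=
    hfin.subset (fun m hm => by
      simp only [Function.mem_support] at hm ⊢
      intro hc; exact hm (by rw [hc, zero_mul]))
  conv_lhs => rw [← sum_weightedHomogeneousComponent (w := bw) h]
  rw [finsum_mul _ _]
  have Hmap := (weightedHomogeneousComponent bw n).toAddMonoidHom.map_finsum hfin'
  rw [LinearMap.toAddMonoidHom_coe] at Hmap
  rw [Hmap]
  have hterm : ∀ m : ℕ × ℕ,
      IsWeightedHomogeneous bw (weightedHomogeneousComponent bw m h * g) (m + e) :=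
    fun m => (weightedHomogeneousComponent_isWeightedHomogeneous m h).mul hg
  rw [finsum_eq_single _ d]
  · exact (hd ▸ hterm d).weightedHomogeneousComponent_same
  · intro m hm
    exact (hterm m).weightedHomogeneousComponent_ne n (by
      intro hEq
      exact hm (by
        have : m + e = d + e := by rw [← hEq, hd]
        exact add_right_cancel this))

theorem comp_mul_homog_of_not (hg : IsWeightedHomogeneous bw g e)
    (hnot : ∀ d : ℕ × ℕ, d + e ≠ n) :
    weightedHomogeneousComponent bw n (h * g) = 0 := by
  classical
  have hfin : (Function.support fun m => weightedHomogeneousComponent bw m h).Finite :=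
    weightedHomogeneousComponent_finsupp h
  have hfin' : (Function.support fun m => weightedHomogeneousComponent bw m h * g).Finite :=
    hfin.subset (fun m hm => by
      simp only [Function.mem_support] at hm ⊢
      intro hc; exact hm (by rw [hc, zero_mul]))
  conv_lhs => rw [← sum_weightedHomogeneousComponent (w := bw) h]
  rw [finsum_mul _ _]
  have Hmap := (weightedHomogeneousComponent bw n).toAddMonoidHom.map_finsum hfin'
  rw [LinearMap.toAddMonoidHom_coe] at Hmap
  rw [Hmap]
  have : ∀ m : ℕ × ℕ, weightedHomogeneousComponent bw n
      (weightedHomogeneousComponent bw m h * g) = 0 := by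
    intro m
    exact ((weightedHomogeneousComponent_isWeightedHomogeneous m h).mul hg).weightedHomogeneousComponent_ne
      n (fun hEq => hnot m hEq.symm)
  rw [funext this]
  exact finsum_zero
end CompMul


theorem isWH_sub {p q : R} {n : ℕ × ℕ} (hp : IsWeightedHomogeneous bw p n)
    (hq : IsWeightedHomogeneous bw q n) : IsWeightedHomogeneous bw (p - q) n := by
  rw [← mem_weightedHomogeneousSubmodule ℂ] at hp hq ⊢
  exact Submodule.sub_mem _ hp hq
theorem Hf_isWH (a : ℂ × ℂ) : IsWeightedHomogeneous bw (Hf a) ((1 : ℕ), (0 : ℕ)) := by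
  rw [Hf]
  apply isWH_sub
  · have := (isWeightedHomogeneous_C bw a.2).mul (isWeightedHomogeneous_X ℂ bw 0)
    simpa [bw] using this
  · have := (isWeightedHomogeneous_C bw a.1).mul (isWeightedHomogeneous_X ℂ bw 1)
    simpa [bw] using this

theorem Vf_isWH (b : ℂ × ℂ) : IsWeightedHomogeneous bw (Vf b) ((0 : ℕ), (1 : ℕ)) := by
  rw [Vf]
  apply isWH_sub
  · have := (isWeightedHomogeneous_C bw b.2).mul (isWeightedHomogeneous_X ℂ bw 2)
    simpa [bw] using this
  · have := (isWeightedHomogeneous_C bw b.1).mul (isWeightedHomogeneous_X ℂ bw 3)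
    simpa [bw] using this

theorem prod_Hf_isWH (A : ℕ → ℂ × ℂ) (m : ℕ) :
    IsWeightedHomogeneous bw (∏ i ∈ Finset.Icc 1 m, Hf (A i)) ((m : ℕ), (0 : ℕ)) := by
  have := IsWeightedHomogeneous.prod (Finset.Icc 1 m) (fun i => Hf (A i))
    (fun _ => ((1 : ℕ), (0 : ℕ))) (fun i _ => Hf_isWH (A i))
  have hsum : (∑ _i ∈ Finset.Icc 1 m, ((1 : ℕ), (0 : ℕ))) = ((m : ℕ), (0 : ℕ)) := by
    rw [Finset.sum_const, Nat.card_Icc]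
    simp [Prod.smul_mk]
  rwa [hsum] at this

theorem prod_Vf_isWH (B : ℕ → ℂ × ℂ) (m : ℕ) :
    IsWeightedHomogeneous bw (∏ j ∈ Finset.Icc 1 m, Vf (B j)) ((0 : ℕ), (m : ℕ)) := by
  have := IsWeightedHomogeneous.prod (Finset.Icc 1 m) (fun j => Vf (B j))
    (fun _ => ((0 : ℕ), (1 : ℕ))) (fun j _ => Vf_isWH (B j))
  have hsum : (∑ _j ∈ Finset.Icc 1 m, ((0 : ℕ), (1 : ℕ))) = ((0 : ℕ), (m : ℕ)) := by
    rw [Finset.sum_const, Nat.card_Icc]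
    simp [Prod.smul_mk]
  rwa [hsum] at this

theorem Hf_ne_zero {a : ℂ × ℂ} (ha : a ≠ 0) : Hf a ≠ 0 := by
  obtain ⟨e, he⟩ := exists_compl ha
  intro h0
  have := psi_Hf (e, e) a
  rw [h0, map_zero] at this
  have hc : cross e a ≠ 0 := by
    rw [cross]
    intro hc
    have : a.1 * e.2 - a.2 * e.1 = -(e.1 * a.2 - e.2 * a.1) := by ring
    rw [this, hc] at he
    norm_num at he
  exact (mul_ne_zero (C_ne_zero.mpr hc) (X_ne_zero 0)) this.symm

theorem Vf_ne_zero {b : ℂ × ℂ} (hb : b ≠ 0) : Vf b ≠ 0 := by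
  obtain ⟨e, he⟩ := exists_compl hb
  intro h0
  have := psi_Vf (e, e) b
  rw [h0, map_zero] at this
  have hc : cross e b ≠ 0 := by
    rw [cross]
    intro hc
    have : b.1 * e.2 - b.2 * e.1 = -(e.1 * b.2 - e.2 * b.1) := by ring
    rw [this, hc] at he
    norm_num at he
  exact (mul_ne_zero (C_ne_zero.mpr hc) (X_ne_zero 1)) this.symm
-- Section 5c : degree analysis of the span of the staircase generators

theorem stairGen_isWH (S : Staircase) (k : ℕ) :
    IsWeightedHomogeneous bw (stairGen S k) ((S.t k : ℕ), (S.s (S.r - k) : ℕ)) := by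
  have := (prod_Hf_isWH S.A (S.t k)).mul (prod_Vf_isWH S.B (S.s (S.r - k)))
  rw [stairGen]
  simpa using this

theorem stairGen_ne_zero (S : Staircase) (k : ℕ) (hk : k ≤ S.r) : stairGen S k ≠ 0 := by
  rw [stairGen]
  apply mul_ne_zero
  · rw [Finset.prod_ne_zero_iff]
    intro i hi
    apply Hf_ne_zero
    apply S.hA0
    simp only [Finset.mem_Icc] at hi ⊢
    have := S.t_mono hk le_rfl
    omega
  · rw [Finset.prod_ne_zero_iff]
    intro j hj
    apply Vf_ne_zero
    apply S.hB0
    simp only [Finset.mem_Icc] at hj ⊢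
    have := S.s_mono (k := S.r - k) (k' := S.r) (by omega) le_rfl
    omega

/-- staircase generators as a function on Fin (r+1) -/
def stairv (S : Staircase) : Fin (S.r + 1) → R := fun k => stairGen S (k : ℕ)

theorem stairGens_eq_range (S : Staircase) : stairGens S = Set.range (stairv S) := by
  ext g
  constructor
  · rintro ⟨k, hk, rfl⟩
    exact ⟨⟨k, by omega⟩, rfl⟩
  · rintro ⟨k, rfl⟩
    exact ⟨(k : ℕ), by omega, rfl⟩

theorem deg_squeeze (S : Staircase) {k m : ℕ} (hk : k ≤ S.r) (hm : m ≤ S.r)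
    (h1 : S.t k ≤ S.t m) (h2 : S.s (S.r - k) ≤ S.s (S.r - m)) : k = m := by
  by_contra hne
  rcases Nat.lt_or_ge k m with h | h
  · have := S.s_strict_mono (k := S.r - m) (k' := S.r - k) (by omega) (by omega)
    omega
  · have := S.t_strict_mono (k := m) (k' := k) (by omega) hk
    omega

theorem mem_span_stair_decomp (S : Staircase) (p : R)
    (hp : p ∈ Ideal.span (stairGens S)) :
    ∃ c : Fin (S.r + 1) → R, ∑ k, c k * stairGen S (k : ℕ) = p := by
  rw [stairGens_eq_range] at hp
  have hp' : p ∈ Submodule.span R (Set.range (stairv S)) := hp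
  obtain ⟨c, hc⟩ := (Submodule.mem_span_range_iff_exists_fun R).mp hp'
  exact ⟨c, by simpa [stairv, smul_eq_mul] using hc⟩

/-- P1: a nonzero bihomogeneous element of the ideal has degree above some corner -/
theorem span_stair_deg (S : Staircase) (p : R) (n : ℕ × ℕ)
    (hp : p ∈ Ideal.span (stairGens S)) (hph : IsWeightedHomogeneous bw p n)
    (hp0 : p ≠ 0) : ∃ k, k ≤ S.r ∧ S.t k ≤ n.1 ∧ S.s (S.r - k) ≤ n.2 := by
  obtain ⟨c, hc⟩ := mem_span_stair_decomp S p hp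
  have hsum : p = ∑ k : Fin (S.r + 1),
      weightedHomogeneousComponent bw n (c k * stairGen S (k : ℕ)) := by
    conv_lhs => rw [← hph.weightedHomogeneousComponent_same]
    rw [← hc, map_sum]
  obtain ⟨k, _, hkne⟩ := Finset.exists_ne_zero_of_sum_ne_zero (by rw [← hsum]; exact hp0)
  have hEx : ∃ d : ℕ × ℕ, d + ((S.t (k : ℕ) : ℕ), (S.s (S.r - (k : ℕ)) : ℕ)) = n := by
    by_contra hnot
    push_neg at hnot
    exact hkne (comp_mul_homog_of_not (c k) _ _ n (stairGen_isWH S (k : ℕ)) hnot)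
  obtain ⟨d, hd⟩ := hEx
  have hd1 : d.1 + S.t (k : ℕ) = n.1 := by
    have := congrArg Prod.fst hd
    simpa using this
  have hd2 : d.2 + S.s (S.r - (k : ℕ)) = n.2 := by
    have := congrArg Prod.snd hd
    simpa using this
  exact ⟨(k : ℕ), by omega, by omega, by omega⟩

/-- P2: a bihomogeneous element of the ideal of corner degree is a scalar multiple -/
theorem span_stair_exact (S : Staircase) (p : R) (m : ℕ) (hm : m ≤ S.r)
    (hp : p ∈ Ideal.span (stairGens S))
    (hph : IsWeightedHomogeneous bw p ((S.t m : ℕ), (S.s (S.r - m) : ℕ))) :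
    ∃ c : ℂ, p = C c * stairGen S m := by
  set dm : ℕ × ℕ := ((S.t m : ℕ), (S.s (S.r - m) : ℕ)) with hdm
  obtain ⟨c, hc⟩ := mem_span_stair_decomp S p hp
  have hsum : p = ∑ k : Fin (S.r + 1),
      weightedHomogeneousComponent bw dm (c k * stairGen S (k : ℕ)) := by
    conv_lhs => rw [← hph.weightedHomogeneousComponent_same]
    rw [← hc, map_sum]
  set m0 : Fin (S.r + 1) := ⟨m, by omega⟩ with hm0
  have hzero : ∀ k : Fin (S.r + 1), k ≠ m0 →
      weightedHomogeneousComponent bw dm (c k * stairGen S (k : ℕ)) = 0 := by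
    intro k hk
    apply comp_mul_homog_of_not (c k) _ _ dm (stairGen_isWH S (k : ℕ))
    intro d hd
    have hd1 : d.1 + S.t (k : ℕ) = S.t m := by
      have := congrArg Prod.fst hd
      simpa [hdm] using this
    have hd2 : d.2 + S.s (S.r - (k : ℕ)) = S.s (S.r - m) := by
      have := congrArg Prod.snd hd
      simpa [hdm] using this
    have hkeq : (k : ℕ) = m := deg_squeeze S (by omega) hm (by omega) (by omega)
    exact hk (Fin.ext hkeq)
  have hsingle : p = weightedHomogeneousComponent bw dm (c m0 * stairGen S m) := by
    rw [hsum, Fintype.sum_eq_single m0 hzero]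
  have hstep : weightedHomogeneousComponent bw dm (c m0 * stairGen S m) =
      weightedHomogeneousComponent bw ((0 : ℕ), (0 : ℕ)) (c m0) * stairGen S m := by
    exact comp_mul_homog_of_add (c m0) _ _ dm (stairGen_isWH S m) ((0 : ℕ), (0 : ℕ))
      (by simp [hdm])
  obtain ⟨cc, hcc⟩ := isWH_C_iff _ (weightedHomogeneousComponent_isWeightedHomogeneous
    ((0 : ℕ), (0 : ℕ)) (c m0))
  exact ⟨cc, by rw [hsingle, hstep, hcc]⟩
/-- Remark 2.8 (uniqueness of minimal generators): if G is any finite set of nonzero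
bihomogeneous polynomials minimally generating the defining ideal I_X of the Ferrers
configuration X associated to the staircase data, then G has exactly r+1 elements and
there is a bijection σ : G → {0,…,r} with g = c_g · f_{σ(g)} for nonzero scalars c_g. -/
theorem statement13 (S : Staircase) (IX : Ideal R)
    (hIX : IX = ⨅ k ∈ Finset.range S.r, ⨅ i ∈ Finset.Ioc (S.t k) (S.t (k + 1)),
      ⨅ j ∈ Finset.Icc 1 (S.s (S.r - k)), Ipt (S.A i, S.B j))
    (G : Finset R) (hG : ∀ g ∈ G, g ≠ 0 ∧ Bihom g) (hmin : MinGen G IX) :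
    G.card = S.r + 1 ∧
      ∃ σ : {g // g ∈ G} ≃ Fin (S.r + 1),
        ∀ g : {g // g ∈ G}, ∃ c : ℂ, c ≠ 0 ∧ (g : R) = C c * stairGen S (σ g) := by
  have hIX' : IX = Ideal.span (stairGens S) := by
    rw [hIX]
    exact IXform_eq_span S
  -- Step 1: each staircase generator appears in G up to a nonzero scalar
  have step1 : ∀ m : Fin (S.r + 1), ∃ g, g ∈ G ∧ ∃ c : ℂ, c ≠ 0 ∧
      g = C c * stairGen S (m : ℕ) := by
    intro m
    have hmr : (m : ℕ) ≤ S.r := by omega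
    set dm : ℕ × ℕ := ((S.t (m : ℕ) : ℕ), (S.s (S.r - (m : ℕ)) : ℕ)) with hdm
    have hfm_mem : stairGen S (m : ℕ) ∈ IX := by
      rw [hIX]
      exact stairGen_mem_IXform S (m : ℕ) hmr
    have hfmG : stairGen S (m : ℕ) ∈ Ideal.span (G : Set R) := by
      rw [hmin.1]; exact hfm_mem
    obtain ⟨φ, -, hφ⟩ := Submodule.mem_span_finset.mp hfmG
    have hfm_ne : stairGen S (m : ℕ) ≠ 0 := stairGen_ne_zero S _ hmr
    have hfm_WH := stairGen_isWH S (m : ℕ)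
    have hsum : stairGen S (m : ℕ) = ∑ g ∈ G,
        weightedHomogeneousComponent bw dm (φ g * g) := by
      conv_lhs => rw [← hfm_WH.weightedHomogeneousComponent_same]
      rw [show (∑ g ∈ G, weightedHomogeneousComponent bw dm (φ g * g)) =
        weightedHomogeneousComponent bw dm (∑ g ∈ G, φ g * g) from (map_sum _ _ _).symm]
      congr 1
      rw [← hφ]
      apply Finset.sum_congr rfl
      intro g _
      rw [smul_eq_mul]
    obtain ⟨g, hgG, hgne⟩ := Finset.exists_ne_zero_of_sum_ne_zero
      (by rw [← hsum]; exact hfm_ne)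
    obtain ⟨hg0, hgbi⟩ := hG g hgG
    obtain ⟨e, he⟩ := (bihom_iff g).mp hgbi
    have hEx : ∃ d : ℕ × ℕ, d + e = dm := by
      by_contra hnot
      push_neg at hnot
      exact hgne (comp_mul_homog_of_not (φ g) g e dm he hnot)
    obtain ⟨d, hd⟩ := hEx
    have hd1 : d.1 + e.1 = S.t (m : ℕ) := by
      have := congrArg Prod.fst hd
      simpa [hdm] using this
    have hd2 : d.2 + e.2 = S.s (S.r - (m : ℕ)) := by
      have := congrArg Prod.snd hd
      simpa [hdm] using this
    have hgIX : g ∈ Ideal.span (stairGens S) := by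
      rw [← hIX', ← hmin.1]
      exact Ideal.subset_span hgG
    obtain ⟨k, hk, hk1, hk2⟩ := span_stair_deg S g e hgIX he hg0
    have hkeq : k = (m : ℕ) := by
      apply deg_squeeze S hk hmr <;> omega
    rw [hkeq] at hk1 hk2
    have h1 : e.1 = S.t (m : ℕ) := by omega
    have h2 : e.2 = S.s (S.r - (m : ℕ)) := by omega
    have heq : e = ((S.t (m : ℕ) : ℕ), (S.s (S.r - (m : ℕ)) : ℕ)) := by
      rw [← h1, ← h2]
    rw [heq] at he
    obtain ⟨c, hc⟩ := span_stair_exact S g (m : ℕ) hmr hgIX he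
    have hcne : c ≠ 0 := by
      rintro rfl
      rw [map_zero, zero_mul] at hc
      exact hg0 hc
    exact ⟨g, hgG, c, hcne, hc⟩
  choose gg hggG cc hccne hgg using step1
  have hinj : Function.Injective gg := by
    intro m m' hmm
    have hne : gg m ≠ 0 := by
      rw [hgg m]
      exact mul_ne_zero (C_ne_zero.mpr (hccne m)) (stairGen_ne_zero S _ (by omega))
    have hWH : IsWeightedHomogeneous bw (gg m)
        ((S.t (m : ℕ) : ℕ), (S.s (S.r - (m : ℕ)) : ℕ)) := by
      rw [hgg m]
      have := (isWeightedHomogeneous_C bw (cc m)).mul (stairGen_isWH S (m : ℕ))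
      simpa using this
    have hWH' : IsWeightedHomogeneous bw (gg m)
        ((S.t (m' : ℕ) : ℕ), (S.s (S.r - (m' : ℕ)) : ℕ)) := by
      rw [hmm, hgg m']
      have := (isWeightedHomogeneous_C bw (cc m')).mul (stairGen_isWH S (m' : ℕ))
      simpa using this
    have hdd := hWH.inj_right hne hWH'
    obtain ⟨h1, h2⟩ := Prod.ext_iff.mp hdd
    exact Fin.ext (deg_squeeze S (by omega) (by omega) (le_of_eq h1) (le_of_eq h2))
  have hsurj : ∀ g ∈ G, ∃ m, gg m = g := by
    intro g hgG
    by_contra hno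
    push_neg at hno
    apply hmin.2 g hgG
    apply le_antisymm
    · calc Ideal.span ((G : Set R) \ {g}) ≤ Ideal.span (G : Set R) :=
            Ideal.span_mono Set.diff_subset
        _ = IX := hmin.1
    · rw [hIX', Ideal.span_le]
      rintro x ⟨k, hk, rfl⟩
      set m : Fin (S.r + 1) := ⟨k, by omega⟩ with hm
      have hx : stairGen S k = C (cc m)⁻¹ * gg m := by
        rw [hgg m, ← mul_assoc, ← C_mul, inv_mul_cancel₀ (hccne m), C_1, one_mul]
      rw [hx]
      apply Ideal.mul_mem_left
      apply Ideal.subset_span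
      exact ⟨hggG m, by simpa using hno m⟩
  set gg' : Fin (S.r + 1) → {x // x ∈ G} := fun m => ⟨gg m, hggG m⟩ with hgg'
  have hbij : Function.Bijective gg' := by
    constructor
    · intro a b hab
      exact hinj (congrArg Subtype.val hab)
    · rintro ⟨g, hg⟩
      obtain ⟨m, hm⟩ := hsurj g hg
      exact ⟨m, Subtype.ext hm⟩
  set E := Equiv.ofBijective gg' hbij with hE
  constructor
  · rw [← Fintype.card_coe G, ← Fintype.card_congr E, Fintype.card_fin]
  · refine ⟨E.symm, fun g => ⟨cc (E.symm g), hccne _, ?_⟩⟩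
    have h1 : gg' (E.symm g) = g := E.apply_symm_apply g
    have h2 : gg (E.symm g) = (g : R) := congrArg Subtype.val h1
    rw [← h2]
    exact hgg (E.symm g)
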